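/- Let H be a contraction hierarchy of G and let X be a node of a separator decomposition of G with highest-ranked vertex u in G_X. Then every edge of H from a vertex of G_X to a vertex outside G_X has its outside endpoint in N_H^↑(u); i.e., the upward H-neighborhood of the top vertex of G_X dominates all H-edges leaving G_X. -/
import Mathlib


/-- `anc parent Z X`: node `X` is a (weak) ancestor of node `Z`. -/
def anc {ι : Type*} (parent : ι → ι) : ι → ι → Prop :=
  Relation.ReflTransGen (fun a b => parent a = b)

/-- Vertex set of the subgraph `G_X` induced by the subtree rooted at `X`. -/
def subVerts {V ι : Type*} (parent : ι → ι) (bag : ι → Set V) (X : ι) : Set V :=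
  {v | ∃ Z, anc parent Z X ∧ v ∈ bag Z}

/-- Trichotomy for two nodes with a common (weak) ancestor in a tree given by a
parent function: they are comparable, or they lie in subtrees of two distinct
siblings. -/
lemma anc_tri {ι : Type*} (parent : ι → ι) (W : ι) :
    ∀ {X Z : ι}, anc parent X Z → anc parent W Z →
      anc parent X W ∨ anc parent W X ∨
        ∃ Y₁ Y₂, parent Y₁ = parent Y₂ ∧ Y₁ ≠ Y₂ ∧ anc parent X Y₁ ∧ anc parent W Y₂ := by
  intro X Z hXZ hWZ
  induction hXZ using Relation.ReflTransGen.head_induction_on with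
  | refl => exact Or.inr (Or.inl hWZ)
  | @head a c hac hcZ ih =>
    rcases ih with h | h | ⟨Y₁, Y₂, h1, h2, h3, h4⟩
    · exact Or.inl (Relation.ReflTransGen.head hac h)
    · rcases Relation.ReflTransGen.cases_tail h with rfl | ⟨Y₂, hWY₂, hY₂⟩
      · exact Or.inl (Relation.ReflTransGen.single hac)
      · by_cases haY : a = Y₂
        · subst haY; exact Or.inr (Or.inl hWY₂)
        · exact Or.inr (Or.inr ⟨a, Y₂, by rw [hac, hY₂], haY,
            Relation.ReflTransGen.refl, hWY₂⟩)
    · exact Or.inr (Or.inr ⟨Y₁, Y₂, h1, h2, Relation.ReflTransGen.head hac h3, h4⟩)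

/-- Let `H` be a contraction hierarchy of `G` and `X` a node of a
separator decomposition of `G` with highest-ranked vertex `u` in `G_X`.  Then every
edge of `H` from a vertex of `G_X` to a vertex outside `G_X` has its outside
endpoint in `N_H^↑(u)`: the upward `H`-neighborhood of the top vertex of `G_X`
dominates all `H`-edges leaving `G_X`. -/
theorem stmt19 {V ι : Type*} (G H : SimpleGraph V) (parent : ι → ι) (bag : ι → Set V)
    (root : ι) (rank : V → ℕ) (hrank : Function.Injective rank)
    (hroot : ∀ Z, anc parent Z root)
    (hantisymm : ∀ Y Z, anc parent Y Z → anc parent Z Y → Y = Z)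
    (hdisj : ∀ Y Z, Y ≠ Z → Disjoint (bag Y) (bag Z))
    (hcover : ∀ v : V, ∃ Z, v ∈ bag Z)
    -- separator property: each node separates the subtrees of its distinct children
    (hsep : ∀ Z Y₁ Y₂, parent Y₁ = Z → parent Y₂ = Z → Y₁ ≠ Y₂ →
      ∀ a ∈ subVerts parent bag Y₁, ∀ b ∈ subVerts parent bag Y₂, ¬ G.Adj a b)
    -- postorder numbering property
    (hpost : ∀ X Z, anc parent X Z → X ≠ Z →
      ∀ v ∈ subVerts parent bag X, ∀ w ∈ bag Z, rank v < rank w)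
    -- characterization of the contraction hierarchy `H` built from `G` by rank
    (hH : ∀ a b : V, rank a < rank b →
      (H.Adj a b ↔ ∃ p : G.Walk a b, ∀ x ∈ p.support, x ≠ a → x ≠ b → rank x < rank a))
    (X : ι) (u : V)
    (hu : u ∈ subVerts parent bag X)
    (humax : ∀ v ∈ subVerts parent bag X, v ≠ u → rank v < rank u)
    -- `G_X` is connected
    (hconn : ∀ v ∈ subVerts parent bag X,
      ∃ p : G.Walk v u, ∀ x ∈ p.support, x ∈ subVerts parent bag X) :
    ∀ a b : V, a ∈ subVerts parent bag X → b ∉ subVerts parent bag X → H.Adj a b →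
      H.Adj u b ∧ rank u < rank b := by
  set S : Set V := subVerts parent bag X with hS
  -- Fact A : any `G`-edge leaving `S` lands on a vertex ranked above all of `S`.
  have factA : ∀ x y : V, x ∈ S → y ∉ S → G.Adj x y → ∀ v ∈ S, rank v < rank y := by
    intro x y hx hy hxy v hv
    obtain ⟨W, hyW⟩ := hcover y
    have hWX : ¬ anc parent W X := fun h => hy ⟨W, h, hyW⟩
    rcases anc_tri parent W (hroot X) (hroot W) with h | h | ⟨Y₁, Y₂, h1, h2, h3, h4⟩
    · have hne : X ≠ W := by
        rintro rfl; exact hWX Relation.ReflTransGen.refl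
      exact hpost X W h hne v hv y hyW
    · exact absurd h hWX
    · obtain ⟨Zx, hZx, hxbag⟩ := hx
      exact absurd hxy (hsep (parent Y₁) Y₁ Y₂ rfl h1.symm h2 x
        ⟨Zx, hZx.trans h3, hxbag⟩ y ⟨W, h4, hyW⟩)
  intro a b ha hb hHab
  have hab : a ≠ b := fun h => hb (h ▸ ha)
  have hrab : rank a ≠ rank b := fun h => hab (hrank h)
  have hau : rank a ≤ rank u := by
    rcases eq_or_ne a u with rfl | h
    · exact le_rfl
    · exact (humax a ha h).le
  -- Key walk lemma: from a walk into the outside whose interior is low-ranked,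
  -- extract a walk staying in `S` except for its last vertex.
  have key : ∀ (s t : V) (q : G.Walk s t), s ∈ S → t ∉ S →
      (∀ x ∈ q.support, x ≠ a → x ≠ t → rank x < rank u) →
      (∃ q' : G.Walk s t, ∀ x ∈ q'.support, x ≠ t → x ∈ S) ∧ ∃ z ∈ S, G.Adj z t := by
    intro s t q
    induction q with
    | nil => intro hs ht _; exact absurd hs ht
    | @cons s s' t hadj q ih =>
      intro hs ht hcond
      by_cases hs' : s' ∈ S
      · obtain ⟨⟨q', hq'⟩, z, hz, hzt⟩ := ih hs' ht
          (fun x hx => hcond x (by simp [SimpleGraph.Walk.support_cons, hx]))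
        refine ⟨⟨SimpleGraph.Walk.cons hadj q', ?_⟩, z, hz, hzt⟩
        intro x hx hxt
        rcases (by simpa [SimpleGraph.Walk.support_cons] using hx : x = s ∨ x ∈ q'.support)
          with rfl | hx'
        · exact hs
        · exact hq' x hx' hxt
      · -- crossing edge: `s'` is ranked above `u`, so it must be `t`
        have hrs' : rank u < rank s' := factA s s' hs hs' hadj u hu
        have hs'a : s' ≠ a := fun h => hs' (h ▸ ha)
        have hs't : s' = t := by
          by_contra hne
          exact absurd (hcond s' (by simp [SimpleGraph.Walk.support_cons]) hs'a hne)
            (not_lt.mpr hrs'.le)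
        subst hs't
        refine ⟨⟨SimpleGraph.Walk.cons hadj SimpleGraph.Walk.nil, ?_⟩, s, hs, hadj⟩
        intro x hx hxt
        rcases (by simpa [SimpleGraph.Walk.support_cons] using hx : x = s ∨ x = s')
          with rfl | rfl
        · exact hs
        · exact absurd rfl hxt
  -- `rank a < rank b`
  have hb_gt : rank a < rank b := by
    rcases lt_or_gt_of_ne hrab with h | h
    · exact h
    · exfalso
      obtain ⟨p, hp⟩ := (hH b a h).mp hHab.symm
      have := key a b p.reverse ha hb (by
        intro x hx hxa hxb
        have hx' : x ∈ p.support := by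
          simpa [SimpleGraph.Walk.support_reverse] using hx
        exact lt_of_lt_of_le (lt_trans (hp x hx' hxb hxa) h) hau)
      obtain ⟨-, z, hz, hzb⟩ := this
      exact absurd (factA z b hz hb hzb a ha) (not_lt.mpr h.le)
  obtain ⟨p, hp⟩ := (hH a b hb_gt).mp hHab
  obtain ⟨⟨q', hq'⟩, z, hz, hzb⟩ := key a b p ha hb
    (fun x hx hxa hxb => lt_of_lt_of_le (hp x hx hxa hxb) hau)
  have hub : rank u < rank b := factA z b hz hb hzb u hu
  obtain ⟨w, hw⟩ := hconn a ha
  refine ⟨(hH u b hub).mpr ⟨w.reverse.append q', ?_⟩, hub⟩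
  intro x hx hxu hxb
  have hx' : x ∈ w.support ∨ x ∈ q'.support := by
    rcases (SimpleGraph.Walk.mem_support_append_iff _ _).mp hx with h | h
    · exact Or.inl (by simpa [SimpleGraph.Walk.support_reverse] using h)
    · exact Or.inr h
  rcases hx' with h | h
  · exact humax x (hw x h) hxu
  · exact humax x (hq' x h hxb) hxu
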